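/- There is a constant K > 0, independent of N, such that for every N ∈ ℕ with Zeckendorf representation N = ∑_{j=1}^m F_{n_j} and every 1 ≤ j ≤ m, the ratio Ā_{n_j}(ε_j)/A_{n_j} satisfies | Ā_{n_j}(ε_j)/A_{n_j} − (1 + p_j) | ≤ K φ^{2 n_j}, where ε_j = −∑_{s=j+1}^m (−φ)^{n_s} and p_j = ∑_{s=j+1}^m (−φ)^{n_s − n_j}; moreover p_j ∈ [−φ², φ]. -/

import Mathlib

open Real Finset

/-- The fractional part of the golden ratio. -/
noncomputable def goldenφ : ℝ := (Real.sqrt 5 - 1) / 2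

/-- `A_n = |2 F_n sin(π φ^n)|`. -/
noncomputable def Aval (n : ℕ) : ℝ := |2 * (Nat.fib n : ℝ) * Real.sin (π * goldenφ ^ n)|

/-- `Ā_n(ε) = 2 F_n |sin π((−φ)^n − ε)|`. -/
noncomputable def Abar (n : ℕ) (ε : ℝ) : ℝ :=
  2 * (Nat.fib n : ℝ) * |Real.sin (π * ((-goldenφ) ^ n - ε))|

lemma gφ_lb : (0.615 : ℝ) < goldenφ := by
  have h5 : Real.sqrt 5 ^ 2 = 5 := Real.sq_sqrt (by norm_num)
  have h0 : 0 ≤ Real.sqrt 5 := Real.sqrt_nonneg 5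
  unfold goldenφ
  nlinarith

lemma gφ_ub : goldenφ < 0.62 := by
  have h5 : Real.sqrt 5 ^ 2 = 5 := Real.sq_sqrt (by norm_num)
  have h0 : 0 ≤ Real.sqrt 5 := Real.sqrt_nonneg 5
  unfold goldenφ
  nlinarith

lemma gφ_sq : goldenφ ^ 2 = 1 - goldenφ := by
  have h5 : Real.sqrt 5 ^ 2 = 5 := Real.sq_sqrt (by norm_num)
  unfold goldenφ
  nlinarith

lemma gφ_pos : 0 < goldenφ := lt_trans (by norm_num) gφ_lb
lemma gφ_lt_one : goldenφ < 1 := lt_trans gφ_ub (by norm_num)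

lemma step_mem (d : ℕ) (hd : 2 ≤ d) (x : ℝ) (hx : x ∈ Set.Icc (-goldenφ ^ 2) goldenφ) :
    (-goldenφ) ^ d * (1 + x) ∈ Set.Icc (-goldenφ ^ 2) goldenφ := by
  obtain ⟨hx1, hx2⟩ := hx
  have hφ0 := gφ_pos
  have hφ1 := gφ_lt_one
  have hsq := gφ_sq
  have hx1' : goldenφ ≤ 1 + x := by nlinarith
  have hx2' : 1 + x ≤ 1 + goldenφ := by linarith
  have hpd : (0:ℝ) < goldenφ ^ d := pow_pos hφ0 d
  have hkey : goldenφ ^ d * (1 + x) ≤ goldenφ ^ (d - 1) := by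
    have : goldenφ ^ d * (1 + goldenφ) = goldenφ ^ (d-1) * (goldenφ * (1 + goldenφ)) := by
      rw [← mul_assoc, ← pow_succ]
      congr 2
      omega
    nlinarith [pow_pos hφ0 (d-1)]
  rcases Nat.even_or_odd d with he | ho
  · rw [he.neg_pow]
    constructor
    · nlinarith
    · calc goldenφ ^ d * (1 + x) ≤ goldenφ ^ (d - 1) := hkey
        _ ≤ goldenφ ^ 1 := pow_le_pow_of_le_one (le_of_lt hφ0) (le_of_lt hφ1) (by omega)
        _ = goldenφ := pow_one _
  · rw [ho.neg_pow]
    have hd3 : 3 ≤ d := by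
      rcases Nat.lt_or_ge d 3 with h | h
      · interval_cases d
        · exact absurd ho (by decide)
      · exact h
    constructor
    · have : goldenφ ^ (d - 1) ≤ goldenφ ^ 2 :=
        pow_le_pow_of_le_one (le_of_lt hφ0) (le_of_lt hφ1) (by omega)
      nlinarith
    · nlinarith

lemma n_mono (m : ℕ) (n : ℕ → ℕ)
    (hgap : ∀ j, 1 ≤ j → j ≤ m - 1 → n j + 2 ≤ n (j + 1)) :
    ∀ i s, 1 ≤ i → i ≤ s → s ≤ m → n i + 2 * (s - i) ≤ n s := by
  intro i s hi
  induction s with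
  | zero => omega
  | succ t ih =>
    intro his hsm
    rcases Nat.lt_or_ge i (t + 1) with h | h
    · have h1 := ih (by omega) (by omega)
      have h2 := hgap t (by omega) (by omega)
      omega
    · have : i = t + 1 := by omega
      rw [this]
      omega

lemma sum_factor (m j : ℕ) (n : ℕ → ℕ) (hjm : j + 1 ≤ m)
    (h1 : n j ≤ n (j + 1))
    (hmono : ∀ s, j + 2 ≤ s → s ≤ m → n (j + 1) ≤ n s) (e : ℕ) (he : e ≤ n j) :
    (∑ s ∈ Finset.Icc (j + 1) m, (-goldenφ) ^ (n s - e))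
      = (-goldenφ) ^ (n (j+1) - e) *
        (1 + ∑ s ∈ Finset.Icc (j + 2) m, (-goldenφ) ^ (n s - n (j+1))) := by
  have hins : Finset.Icc (j + 1) m = insert (j + 1) (Finset.Icc (j + 2) m) := by
    ext x
    simp only [Finset.mem_Icc, Finset.mem_insert]
    omega
  rw [hins, Finset.sum_insert (by simp), mul_add, mul_one, Finset.mul_sum]
  congr 1
  apply Finset.sum_congr rfl
  intro s hs
  simp only [Finset.mem_Icc] at hs
  rw [← pow_add]
  congr 1
  have h2 := hmono s hs.1 hs.2
  omega

lemma p_bound (m : ℕ) (n : ℕ → ℕ)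
    (hgap : ∀ j, 1 ≤ j → j ≤ m - 1 → n j + 2 ≤ n (j + 1)) :
    ∀ k j, 1 ≤ j → j ≤ m → m - j = k →
      (∑ s ∈ Finset.Icc (j + 1) m, (-goldenφ) ^ (n s - n j)) ∈
        Set.Icc (-goldenφ ^ 2) goldenφ := by
  intro k
  induction k with
  | zero =>
    intro j hj1 hjm hk
    rw [Finset.Icc_eq_empty (by omega), Finset.sum_empty]
    constructor
    · nlinarith [gφ_pos]
    · exact le_of_lt gφ_pos
  | succ k ih =>
    intro j hj1 hjm hk
    have hjm' : j + 1 ≤ m := by omega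
    have hmono := n_mono m n hgap
    rw [sum_factor m j n hjm' (by have := hgap j hj1 (by omega); omega)
      (fun s hs1 hs2 => by have := hmono (j+1) s (by omega) (by omega) hs2; omega)
      (n j) le_rfl]
    have hd : 2 ≤ n (j + 1) - n j := by
      have := hgap j hj1 (by omega)
      omega
    exact step_mem _ hd _ (ih (j + 1) (by omega) hjm' (by omega))

set_option maxHeartbeats 1000000 in
lemma key_small (b c : ℝ) (hb0 : 0 < b) (hb1 : b ≤ 1/2) (hc0 : 0.6 ≤ c) (hc1 : c ≤ 1.62) :
    |Real.sin (b * c) / Real.sin b - c| ≤ 3 * b ^ 2 := by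
  have ha0 : 0 < b * c := by nlinarith
  have ha1 : b * c ≤ 1 := by nlinarith
  have hbb : b ^ 2 ≤ 1/4 := by nlinarith
  have s1 := Real.sin_lt ha0
  have s2 : b * c - (b * c) ^ 3 / 4 < Real.sin (b * c) := by
    have := Real.sin_gt_sub_cube ha0
    nlinarith [pow_pos ha0 3]
  have s3 := Real.sin_lt hb0
  have s4 : b - b ^ 3 / 4 < Real.sin b := by
    have := Real.sin_gt_sub_cube hb0
    nlinarith [pow_pos hb0 3]
  have hb3 : b ^ 3 ≤ b / 4 := by nlinarith
  have hsb : 0 < Real.sin b := by nlinarith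
  have hc0' : (0:ℝ) < c := by linarith
  have hmul1 : c * (b - b ^ 3 / 4) < c * Real.sin b := by
    exact mul_lt_mul_of_pos_left s4 hc0'
  have hmul2 : c * Real.sin b < c * b := mul_lt_mul_of_pos_left s3 hc0'
  have h5 : Real.sin (b * c) - Real.sin b * c ≤ c * b ^ 3 / 4 := by nlinarith
  have h6 : -(c ^ 3 * b ^ 3 / 4) ≤ Real.sin (b * c) - Real.sin b * c := by nlinarith
  have hsin_lb : (45/16) * b ^ 3 ≤ 3 * b ^ 2 * Real.sin b := by
    have := mul_lt_mul_of_pos_left s4 (show (0:ℝ) < 3 * b ^ 2 by positivity)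
    nlinarith [pow_pos hb0 3, pow_pos hb0 5, sq_nonneg b]
  have hc3 : c ^ 3 ≤ 4.3 := by
    nlinarith [mul_nonneg (sub_nonneg.2 hc1) (sq_nonneg c), sq_nonneg c]
  rw [div_sub' (ne_of_gt hsb), abs_div, abs_of_pos hsb, div_le_iff₀ hsb, abs_le]
  constructor
  · nlinarith [pow_pos hb0 3]
  · nlinarith [pow_pos hb0 3]

lemma key_tiny (b c q : ℝ) (hsb : 1/2 ≤ Real.sin b) (hc : |c| ≤ 2) (hq : 4 ≤ q) :
    |Real.sin (b * c) / Real.sin b - c| ≤ q := by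
  have hsb0 : 0 < Real.sin b := by linarith
  have h1 : |Real.sin (b * c) / Real.sin b| ≤ 2 := by
    rw [abs_div, abs_of_pos hsb0, div_le_iff₀ hsb0]
    have := Real.abs_sin_le_one (b * c)
    linarith
  calc |Real.sin (b * c) / Real.sin b - c|
      ≤ |Real.sin (b * c) / Real.sin b| + |c| := by
        rw [sub_eq_add_neg]
        exact (abs_add_le _ _).trans (by rw [abs_neg])
    _ ≤ 4 := by linarith
    _ ≤ q := hq

set_option maxHeartbeats 1000000 in
lemma ratio_est (ν : ℕ) (hn : 2 ≤ ν) (p : ℝ) (hp : p ∈ Set.Icc (-goldenφ ^ 2) goldenφ) :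
    |Real.sin ((π * goldenφ ^ ν) * (1 + p)) / Real.sin (π * goldenφ ^ ν) - (1 + p)|
      ≤ 1000 * goldenφ ^ (2 * ν) := by
  obtain ⟨hp1, hp2⟩ := hp
  have hφl := gφ_lb
  have hφu := gφ_ub
  have hsq := gφ_sq
  have hπl := Real.pi_gt_d2
  have hπu := Real.pi_lt_d2
  have hc0 : (0.6 : ℝ) ≤ 1 + p := by nlinarith
  have hc1 : (1 + p : ℝ) ≤ 1.62 := by nlinarith
  have hpow : goldenφ ^ (2 * ν) = (goldenφ ^ ν) ^ 2 := by
    rw [← pow_mul, mul_comm]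
  have hφν0 : 0 < goldenφ ^ ν := pow_pos gφ_pos ν
  rcases Nat.lt_or_ge ν 4 with h4 | h4
  · -- ν = 2 or 3
    have hq : (4:ℝ) ≤ 1000 * goldenφ ^ (2 * ν) := by
      have h6 : goldenφ ^ (2*ν) ≥ goldenφ ^ 6 :=
        pow_le_pow_of_le_one (le_of_lt gφ_pos) (le_of_lt gφ_lt_one) (by omega)
      have : (0.615:ℝ) ^ 6 ≤ goldenφ ^ 6 := by
        apply pow_le_pow_left₀ (by norm_num) (le_of_lt hφl)
      nlinarith
    have hcabs : |1 + p| ≤ 2 := by rw [abs_le]; constructor <;> linarith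
    have hφ3 : goldenφ ^ 3 = (1 - goldenφ) * goldenφ := by
      rw [pow_succ, hsq]
    have hφ3l : (0.2356:ℝ) ≤ goldenφ ^ 3 := by rw [hφ3]; nlinarith
    have hφ3u : goldenφ ^ 3 ≤ 0.2368 := by rw [hφ3]; nlinarith
    have hbl : (0.73:ℝ) ≤ π * goldenφ ^ 3 := by nlinarith
    have hbu : π * goldenφ ^ 3 ≤ 0.75 := by nlinarith
    have hb2' : (π * goldenφ ^ 3) ^ 2 ≤ 0.5625 := by nlinarith
    have hb3 : (π * goldenφ ^ 3) ^ 3 ≤ 0.43 := by nlinarith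
    have hsb3 : 1/2 ≤ Real.sin (π * goldenφ ^ 3) := by
      have hb0 : 0 < π * goldenφ ^ 3 := by positivity
      have : π * goldenφ ^ 3 - (π * goldenφ ^ 3) ^ 3 / 4 < Real.sin (π * goldenφ ^ 3) := by
        have := Real.sin_gt_sub_cube hb0
        nlinarith [pow_pos hb0 3]
      linarith
    have hφ2u : goldenφ ^ 2 ≤ 0.385 := by rw [hsq]; linarith
    have h32 : goldenφ ^ 3 ≤ goldenφ ^ 2 :=
      pow_le_pow_of_le_one (le_of_lt gφ_pos) (le_of_lt gφ_lt_one) (by norm_num)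
    interval_cases ν
    · have hmono : Real.sin (π * goldenφ ^ 3) ≤ Real.sin (π * goldenφ ^ 2) := by
        apply Real.sin_le_sin_of_le_of_le_pi_div_two
        · linarith [Real.pi_pos, hbl]
        · have := mul_le_mul_of_nonneg_left hφ2u (le_of_lt Real.pi_pos)
          linarith
        · exact mul_le_mul_of_nonneg_left h32 (le_of_lt Real.pi_pos)
      exact key_tiny _ _ _ (by linarith) hcabs hq
    · exact key_tiny _ _ _ hsb3 hcabs hq
  · -- ν ≥ 4
    have hb1 : π * goldenφ ^ ν ≤ 1/2 := by
      have h1 : goldenφ ^ ν ≤ goldenφ ^ 4 :=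
        pow_le_pow_of_le_one (le_of_lt gφ_pos) (le_of_lt gφ_lt_one) h4
      have h2 : goldenφ ^ 4 ≤ (0.62:ℝ) ^ 4 := by
        apply pow_le_pow_left₀ (le_of_lt gφ_pos) (le_of_lt hφu)
      nlinarith [Real.pi_pos]
    have := key_small (π * goldenφ ^ ν) (1 + p) (by positivity) hb1 hc0 hc1
    refine this.trans ?_
    rw [hpow, mul_pow]
    have hπ2 : π ^ 2 ≤ 9.93 := by nlinarith
    nlinarith [sq_nonneg (goldenφ ^ ν)]

/-- There is a constant `K > 0`, independent of `N`, such that for every `N ∈ ℕ` with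
Zeckendorf representation `N = ∑_{j=1}^m F_{n_j}` and every `1 ≤ j ≤ m`, the ratio
`Ā_{n_j}(ε_j)/A_{n_j}` satisfies `|Ā_{n_j}(ε_j)/A_{n_j} − (1 + p_j)| ≤ K φ^{2 n_j}`, where
`ε_j = −∑_{s=j+1}^m (−φ)^{n_s}` and `p_j = ∑_{s=j+1}^m (−φ)^{n_s − n_j}`; moreover
`p_j ∈ [−φ², φ]`. -/
theorem Abar_ratio_estimate :
    ∃ K : ℝ, 0 < K ∧
      ∀ (N m : ℕ) (n : ℕ → ℕ), 1 ≤ m → 2 ≤ n 1 →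
        (∀ j, 1 ≤ j → j ≤ m - 1 → n j + 2 ≤ n (j + 1)) →
        N = ∑ j ∈ Finset.Icc 1 m, Nat.fib (n j) →
        ∀ j, 1 ≤ j → j ≤ m →
          |Abar (n j) (-(∑ s ∈ Finset.Icc (j + 1) m, (-goldenφ) ^ (n s))) / Aval (n j) -
              (1 + ∑ s ∈ Finset.Icc (j + 1) m, (-goldenφ) ^ (n s - n j))|
            ≤ K * goldenφ ^ (2 * n j) ∧
          (∑ s ∈ Finset.Icc (j + 1) m, (-goldenφ) ^ (n s - n j)) ∈
            Set.Icc (-goldenφ ^ 2) goldenφ := by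
  refine ⟨1000, by norm_num, ?_⟩
  intro N m n hm hn2 hgap hN j hj1 hjm
  have hmono := n_mono m n hgap
  have hνj : 2 ≤ n j := by
    have := hmono 1 j le_rfl hj1 hjm
    omega
  have hp := p_bound m n hgap (m - j) j hj1 hjm rfl
  refine ⟨?_, hp⟩
  obtain ⟨hp1, hp2⟩ := hp
  set p := ∑ s ∈ Finset.Icc (j + 1) m, (-goldenφ) ^ (n s - n j) with hpdef
  have hsq := gφ_sq
  have hφ0 := gφ_pos
  have hφ1 := gφ_lt_one
  have hc0 : 0 < 1 + p := by nlinarith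
  have hcφ : 1 + p ≤ 1 + goldenφ := by linarith
  have harg : (-goldenφ) ^ (n j) - (-(∑ s ∈ Finset.Icc (j + 1) m, (-goldenφ) ^ (n s)))
      = (-goldenφ) ^ (n j) * (1 + p) := by
    rw [sub_neg_eq_add, mul_add, mul_one, hpdef, Finset.mul_sum]
    congr 1
    apply Finset.sum_congr rfl
    intro s hs
    simp only [Finset.mem_Icc] at hs
    rw [← pow_add]
    congr 1
    have := hmono j s hj1 (by omega) hs.2
    omega
  have heq : (π * goldenφ ^ (n j)) * (1 + p) = π * (goldenφ ^ (n j) * (1 + p)) := by ring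
  have harglt : goldenφ ^ (n j) * (1 + p) < 1 := by
    have h1 : goldenφ ^ (n j) ≤ goldenφ ^ 2 := pow_le_pow_of_le_one hφ0.le hφ1.le hνj
    nlinarith [pow_pos hφ0 (n j)]
  have hpos : 0 < Real.sin ((π * goldenφ ^ (n j)) * (1 + p)) := by
    rw [heq]
    apply Real.sin_pos_of_pos_of_lt_pi
    · positivity
    · nlinarith [Real.pi_pos, pow_pos hφ0 (n j)]
  have habs : |Real.sin (π * ((-goldenφ) ^ (n j) * (1 + p)))|
      = Real.sin ((π * goldenφ ^ (n j)) * (1 + p)) := by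
    rcases Nat.even_or_odd (n j) with he | ho
    · rw [he.neg_pow, ← heq, abs_of_pos hpos]
    · rw [ho.neg_pow]
      have h2 : π * (-(goldenφ ^ (n j)) * (1 + p)) = -((π * goldenφ ^ (n j)) * (1 + p)) := by
        ring
      rw [h2, Real.sin_neg, abs_neg, abs_of_pos hpos]
  have hsinb : 0 < Real.sin (π * goldenφ ^ (n j)) := by
    apply Real.sin_pos_of_pos_of_lt_pi
    · positivity
    · have h1 : goldenφ ^ (n j) < 1 := pow_lt_one₀ hφ0.le hφ1 (by omega)
      nlinarith [Real.pi_pos]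
  have hfib : (0:ℝ) < (Nat.fib (n j) : ℝ) := by
    exact_mod_cast Nat.fib_pos.mpr (by omega)
  have hAval : Aval (n j) = 2 * (Nat.fib (n j) : ℝ) * Real.sin (π * goldenφ ^ (n j)) := by
    unfold Aval
    exact abs_of_pos (mul_pos (mul_pos two_pos hfib) hsinb)
  have hAbar : Abar (n j) (-(∑ s ∈ Finset.Icc (j + 1) m, (-goldenφ) ^ (n s)))
      = 2 * (Nat.fib (n j) : ℝ) * Real.sin ((π * goldenφ ^ (n j)) * (1 + p)) := by
    unfold Abar
    rw [harg, habs]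
  rw [hAbar, hAval, mul_div_mul_left _ _ (ne_of_gt (mul_pos two_pos hfib))]
  exact ratio_est (n j) hνj p ⟨hp1, hp2⟩
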